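/- Let $s \in [0,T]$, let $\rho$ be a random variable with values in $[0,T]\cup\{\infty\}$ whose survival process $G(\rho)$ (satisfying $P(\rho>t\mid\mathscr{F}_t)=G_t(\rho)$ a.s. for each $t$) is jointly measurable, and let $X, \tilde{X}$ be $[0,\infty]$-valued measurable processes such that $X_t$ is $\mathscr{F}_t$-measurable and $X_t = \tilde{X}_t$ a.s. on $\{\rho > t\}$ for all $t \in [s,T]$. Then $E[\int_s^{T\wedge\rho} \tilde{X}_t\,dt \mid \mathscr{F}_s] = E[\int_s^T X_t G_t(\rho)\,dt \mid \mathscr{F}_s]$ almost surely. -/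

import Mathlib

open MeasureTheory Set
open scoped ENNReal

/-- `g` is a version of the conditional expectation of the `[0,∞]`-valued random
variable `f` given the sub-σ-field `m'`. -/
def IsLCondExp {Ω : Type*} {mΩ : MeasurableSpace Ω} (μ : Measure Ω)
    (m' : MeasurableSpace Ω) (f g : Ω → ℝ≥0∞) : Prop :=
  Measurable[m'] g ∧ ∀ A : Set Ω, MeasurableSet[m'] A →
    ∫⁻ ω in A, f ω ∂μ = ∫⁻ ω in A, g ω ∂μ

/-- Set-lintegral is unchanged by trimming, for trim-measurable functions and sets. -/
lemma setLIntegral_trim' {Ω : Type*} {mΩ m' : MeasurableSpace Ω} {μ : @MeasureTheory.Measure Ω mΩ}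
    (hm : m' ≤ mΩ) {f : Ω → ℝ≥0∞} (hf : Measurable[m'] f) {B : Set Ω}
    (hB : MeasurableSet[m'] B) :
    ∫⁻ x in B, f x ∂(μ.trim hm) = ∫⁻ x in B, f x ∂μ := by
  rw [← @lintegral_indicator Ω m' (μ.trim hm) B hB f,
    ← @lintegral_indicator Ω mΩ μ B (hm B hB) f]
  exact lintegral_trim hm (hf.indicator hB)

/-- "Pull out" lemma: if `f` and `g` have the same integral on every `m'`-measurable set,
then `∫ h * f = ∫ h * g` for every nonnegative `m'`-measurable `h`. -/
lemma lintegral_mul_eq_of_forall_set {Ω : Type*} {mΩ m' : MeasurableSpace Ω}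
    (hm : m' ≤ mΩ) (μ : @MeasureTheory.Measure Ω mΩ) {f g : Ω → ℝ≥0∞}
    (hf : Measurable[mΩ] f) (hg : Measurable[m'] g)
    (heq : ∀ B : Set Ω, MeasurableSet[m'] B →
      ∫⁻ ω in B, f ω ∂μ = ∫⁻ ω in B, g ω ∂μ)
    {h : Ω → ℝ≥0∞} (hh : Measurable[m'] h) :
    ∫⁻ ω, h ω * f ω ∂μ = ∫⁻ ω, h ω * g ω ∂μ := by
  have hg' : Measurable[mΩ] g := hg.mono hm le_rfl
  have key : ∀ (c : ℝ≥0∞) (B : Set Ω), MeasurableSet[m'] B → ∀ (k : Ω → ℝ≥0∞),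
      Measurable[mΩ] k →
      ∫⁻ ω, (B.indicator (fun _ => c)) ω * k ω ∂μ = c * ∫⁻ ω in B, k ω ∂μ := by
    intro c B hB k hk
    have h1 : ∀ ω, (B.indicator (fun _ => c)) ω * k ω
        = B.indicator (fun ω => c * k ω) ω := by
      intro ω; by_cases hω : ω ∈ B <;> simp [hω]
    rw [lintegral_congr h1, @lintegral_indicator Ω mΩ μ B (hm B hB),
      lintegral_const_mul c hk]
  refine @Measurable.ennreal_induction Ω m'
    (fun h => ∫⁻ ω, h ω * f ω ∂μ = ∫⁻ ω, h ω * g ω ∂μ) ?_ ?_ ?_ h hh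
  · intro c B hB
    rw [key c B hB f hf, key c B hB g hg', heq B hB]
  · intro h₁ h₂ _ hh₁ hh₂ ih₁ ih₂
    have m₁ : Measurable[mΩ] h₁ := hh₁.mono hm le_rfl
    simp only [Pi.add_apply, add_mul]
    rw [lintegral_add_left (f := fun ω => h₁ ω * f ω) (m₁.mul hf),
      lintegral_add_left (f := fun ω => h₁ ω * g ω) (m₁.mul hg'), ih₁, ih₂]
  · intro hfn hseq hmono ih
    have hswap : ∀ (k : Ω → ℝ≥0∞), Measurable[mΩ] k →
        ∫⁻ ω, (⨆ n, hfn n ω) * k ω ∂μ = ⨆ n, ∫⁻ ω, hfn n ω * k ω ∂μ := by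
      intro k hk
      simp_rw [ENNReal.iSup_mul]
      exact lintegral_iSup (fun n => ((hseq n).mono hm le_rfl).mul hk)
        (fun i j hij ω => mul_le_mul_left (hmono hij ω) _)
    rw [hswap f hf, hswap g hg']
    exact iSup_congr ih

/-- stopped integral: if `Xₜ` is `𝓕ₜ`-measurable and `Xₜ = X̃ₜ` a.s.
on `{ρ > t}` for all `t ∈ [s,T]`, and `G` is a jointly measurable survival process of
`ρ`, then `E[∫_s^{T∧ρ} X̃ₜ dt | 𝓕ₛ] = E[∫_s^T Xₜ Gₜ(ρ) dt | 𝓕ₛ]` a.s. -/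
theorem stmt2 {Ω : Type*} [mΩ : MeasurableSpace Ω] (μ : Measure Ω)
    [IsProbabilityMeasure μ]
    (T : ℝ) (hT : 0 ≤ T)
    (F : ℝ → MeasurableSpace Ω) (hFmono : Monotone F) (hFle : ∀ t, F t ≤ mΩ)
    (s : ℝ) (hs : s ∈ Icc 0 T)
    (ρ : Ω → ℝ≥0∞) (hρ : Measurable[mΩ] ρ)
    (G : ℝ → Ω → ℝ≥0∞)
    (hGmeas : Measurable[(inferInstance : MeasurableSpace (ℝ × Ω))]
      (fun p : ℝ × Ω => G p.1 p.2))
    (hGver : ∀ t ∈ Icc (0:ℝ) T,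
      IsLCondExp μ (F t) (({ω' | ENNReal.ofReal t < ρ ω'}).indicator 1) (G t))
    (X X' : ℝ → Ω → ℝ≥0∞)
    (hXmeas : Measurable[(inferInstance : MeasurableSpace (ℝ × Ω))]
      (fun p : ℝ × Ω => X p.1 p.2))
    (hX'meas : Measurable[(inferInstance : MeasurableSpace (ℝ × Ω))]
      (fun p : ℝ × Ω => X' p.1 p.2))
    (hXad : ∀ t ∈ Icc s T, Measurable[F t] (X t))
    (hagree : ∀ t ∈ Icc s T, ∀ᵐ ω ∂μ, ENNReal.ofReal t < ρ ω → X t ω = X' t ω) :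
    ∀ Y Z : Ω → ℝ≥0∞,
      IsLCondExp μ (F s)
        (fun ω => ∫⁻ t in Icc s T,
          (if ENNReal.ofReal t < ρ ω then X' t ω else 0) ∂volume) Y →
      IsLCondExp μ (F s)
        (fun ω => ∫⁻ t in Icc s T, X t ω * G t ω ∂volume) Z →
      Y =ᵐ[μ] Z := by
  intro Y Z hY hZ
  have hms : F s ≤ mΩ := hFle s
  -- joint measurability of the two integrands as functions on Ω × ℝ
  have hmeas1 : Measurable (fun p : Ω × ℝ =>
      if ENNReal.ofReal p.2 < ρ p.1 then X' p.2 p.1 else 0) := by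
    refine Measurable.ite ?_ ?_ measurable_const
    · exact measurableSet_lt (measurable_snd.ennreal_ofReal) (hρ.comp measurable_fst)
    · exact hX'meas.comp measurable_swap
  have hmeas2 : Measurable (fun p : Ω × ℝ => X p.2 p.1 * G p.2 p.1) :=
    (hXmeas.comp measurable_swap).mul (hGmeas.comp measurable_swap)
  -- key : equal set integrals over F s-measurable sets
  have key : ∀ B : Set Ω, MeasurableSet[F s] B →
      ∫⁻ ω in B, (∫⁻ t in Icc s T,
        (if ENNReal.ofReal t < ρ ω then X' t ω else 0) ∂volume) ∂μ
      = ∫⁻ ω in B, (∫⁻ t in Icc s T, X t ω * G t ω ∂volume) ∂μ := by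
    intro B hB
    have hBm : MeasurableSet B := hms B hB
    rw [lintegral_lintegral_swap (hmeas1.aemeasurable),
      lintegral_lintegral_swap (f := fun ω t => X t ω * G t ω)
        (hmeas2.aemeasurable)]
    refine setLIntegral_congr_fun measurableSet_Icc (fun t ht => ?_)
    -- now fixed t ∈ Icc s T
    have ht0T : t ∈ Icc (0:ℝ) T := ⟨hs.1.trans ht.1, ht.2⟩
    obtain ⟨hGm, hGprop⟩ := hGver t ht0T
    have hXt : Measurable[F t] (X t) := hXad t ht
    have hBt : MeasurableSet[F t] B := hFmono ht.1 B hB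
    have hsetm : MeasurableSet {ω' | ENNReal.ofReal t < ρ ω'} :=
      measurableSet_lt measurable_const hρ
    calc ∫⁻ ω in B, (if ENNReal.ofReal t < ρ ω then X' t ω else 0) ∂μ
        = ∫⁻ ω in B, (if ENNReal.ofReal t < ρ ω then X t ω else 0) ∂μ := by
          refine lintegral_congr_ae (ae_restrict_of_ae ((hagree t ht).mono
            fun ω hω => ?_))
          by_cases h : ENNReal.ofReal t < ρ ω
          · simp only [if_pos h]; exact (hω h).symm
          · simp [h]
      _ = ∫⁻ ω, (B.indicator (X t)) ω *
            (({ω' | ENNReal.ofReal t < ρ ω'}).indicator 1) ω ∂μ := by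
          rw [← lintegral_indicator hBm]
          refine lintegral_congr fun ω => ?_
          by_cases h1 : ω ∈ B <;> by_cases h2 : ENNReal.ofReal t < ρ ω <;>
            simp [h1, h2, Set.indicator_apply, Set.mem_setOf_eq]
      _ = ∫⁻ ω, (B.indicator (X t)) ω * G t ω ∂μ := by
          refine lintegral_mul_eq_of_forall_set (hFle t) μ ?_ hGm hGprop
            (hXt.indicator hBt)
          exact measurable_const.indicator hsetm
      _ = ∫⁻ ω in B, X t ω * G t ω ∂μ := by
          rw [← lintegral_indicator hBm]
          refine lintegral_congr fun ω => ?_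
          by_cases h1 : ω ∈ B <;> simp [h1, Set.indicator_apply]
  -- uniqueness via trimmed measure
  have hYZ : ∀ B : Set Ω, MeasurableSet[F s] B →
      ∫⁻ ω in B, Y ω ∂μ = ∫⁻ ω in B, Z ω ∂μ := by
    intro B hB
    rw [← hY.2 B hB, ← hZ.2 B hB]
    exact key B hB
  have htrim : Y =ᵐ[μ.trim hms] Z := by
    refine ae_eq_of_forall_setLIntegral_eq_of_sigmaFinite hY.1 hZ.1
      fun B hB _ => ?_
    rw [setLIntegral_trim' hms hY.1 hB, setLIntegral_trim' hms hZ.1 hB]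
    exact hYZ B hB
  exact ae_eq_of_ae_eq_trim htrim
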